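/- Stationary radially symmetric exact solution (3-21), generic case: Let d₁, d₂ be real, d₃ ≠ 0, and α a real constant with α ≠ 0 and α ≠ 2d₃; let C₀, C₁ be real constants and F : ℝ → ℝ any differentiable function. Then the time-independent functions u(t,x,y) = 2(2d₂ − α)/(x²+y²), v(t,x,y) = 2(2d₁ − α)/(x²+y²), w(t,x,y) = C₀ + C₁(x²+y²)^{−α/(2d₃)} + 2(2d₁ − α)(2d₂ − α)/((α − 2d₃)(x²+y²)) satisfy system (3-1) at every point (t,x,y) with (x,y) ≠ (0,0). -/

import Mathlib

/-- Partial derivative with respect to `t` of a function of `(t,x,y)`. -/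
noncomputable def pdT (f : ℝ × ℝ × ℝ → ℝ) (p : ℝ × ℝ × ℝ) : ℝ := fderiv ℝ f p (1, 0, 0)
/-- Partial derivative with respect to `x`. -/
noncomputable def pdX (f : ℝ × ℝ × ℝ → ℝ) (p : ℝ × ℝ × ℝ) : ℝ := fderiv ℝ f p (0, 1, 0)
/-- Partial derivative with respect to `y`. -/
noncomputable def pdY (f : ℝ × ℝ × ℝ → ℝ) (p : ℝ × ℝ × ℝ) : ℝ := fderiv ℝ f p (0, 0, 1)

/-- `(u,v,w)` solves system (3-1), the convective Lotka–Volterra system (`k = 1`)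
whose stream function is `Ψ = F(x²+y²) + α·arctan(x/y)`; here `F'` denotes the
derivative of `F`. -/
def Solves31 (α d₁ d₂ d₃ : ℝ) (F' : ℝ → ℝ) (u v w : ℝ × ℝ × ℝ → ℝ)
    (Ω : Set (ℝ × ℝ × ℝ)) : Prop :=
  ∀ p ∈ Ω,
    (pdT u p - α * (p.2.1 * pdX u p + p.2.2 * pdY u p) / (p.2.1 ^ 2 + p.2.2 ^ 2)
        + 2 * F' (p.2.1 ^ 2 + p.2.2 ^ 2) * (p.2.1 * pdY u p - p.2.2 * pdX u p)
      = d₁ * (pdX (pdX u) p + pdY (pdY u) p) - u p * v p) ∧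
    (pdT v p - α * (p.2.1 * pdX v p + p.2.2 * pdY v p) / (p.2.1 ^ 2 + p.2.2 ^ 2)
        + 2 * F' (p.2.1 ^ 2 + p.2.2 ^ 2) * (p.2.1 * pdY v p - p.2.2 * pdX v p)
      = d₂ * (pdX (pdX v) p + pdY (pdY v) p) - u p * v p) ∧
    (pdT w p - α * (p.2.1 * pdX w p + p.2.2 * pdY w p) / (p.2.1 ^ 2 + p.2.2 ^ 2)
        + 2 * F' (p.2.1 ^ 2 + p.2.2 ^ 2) * (p.2.1 * pdY w p - p.2.2 * pdX w p)
      = d₃ * (pdX (pdX w) p + pdY (pdY w) p) + u p * v p)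

noncomputable def gf (a b c β γ : ℝ) (s : ℝ) : ℝ := a + b * s ^ β + c * s ^ γ

def r2 (p : ℝ × ℝ × ℝ) : ℝ := p.2.1 ^ 2 + p.2.2 ^ 2

noncomputable def Lx : ℝ × ℝ × ℝ →L[ℝ] ℝ :=
  (ContinuousLinearMap.fst ℝ ℝ ℝ).comp (ContinuousLinearMap.snd ℝ ℝ (ℝ × ℝ))
noncomputable def Ly : ℝ × ℝ × ℝ →L[ℝ] ℝ :=
  (ContinuousLinearMap.snd ℝ ℝ ℝ).comp (ContinuousLinearMap.snd ℝ ℝ (ℝ × ℝ))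

@[simp] lemma Lx_apply (v : ℝ × ℝ × ℝ) : Lx v = v.2.1 := rfl
@[simp] lemma Ly_apply (v : ℝ × ℝ × ℝ) : Ly v = v.2.2 := rfl

lemma gf_hasDerivAt (a b c β γ s : ℝ) (hs : s ≠ 0) :
    HasDerivAt (gf a b c β γ) (gf 0 (b*β) (c*γ) (β-1) (γ-1) s) s := by
  have h1 := (Real.hasDerivAt_rpow_const (x := s) (p := β) (Or.inl hs)).const_mul b
  have h2 := (Real.hasDerivAt_rpow_const (x := s) (p := γ) (Or.inl hs)).const_mul c
  have h := ((hasDerivAt_const s a).add h1).add h2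
  refine h.congr_deriv ?_
  simp [gf]; ring

lemma hasFDerivAt_r2 (p : ℝ × ℝ × ℝ) :
    HasFDerivAt r2 ((2*p.2.1) • Lx + (2*p.2.2) • Ly) p := by
  have hx : HasFDerivAt (fun q : ℝ × ℝ × ℝ => q.2.1) Lx p := Lx.hasFDerivAt
  have hy : HasFDerivAt (fun q : ℝ × ℝ × ℝ => q.2.2) Ly p := Ly.hasFDerivAt
  have h := (hx.mul hx).add (hy.mul hy)
  have hfun : r2 = fun q : ℝ × ℝ × ℝ => q.2.1 * q.2.1 + q.2.2 * q.2.2 := by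
    funext q; simp [r2, sq]
  rw [hfun]
  refine h.congr_fderiv ?_
  ext v <;> simp <;> ring

lemma hasFDerivAt_radial (g : ℝ → ℝ) (g' : ℝ) (p : ℝ × ℝ × ℝ)
    (hg : HasDerivAt g g' (r2 p)) :
    HasFDerivAt (fun q => g (r2 q)) (g' • ((2*p.2.1) • Lx + (2*p.2.2) • Ly)) p :=
  hg.comp_hasFDerivAt p (hasFDerivAt_r2 p)

lemma r2_pos {p : ℝ × ℝ × ℝ} (hp : p.2 ≠ 0) : 0 < r2 p := by
  rcases not_and_or.mp (fun h => hp (Prod.ext h.1 h.2)) with h | h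
  · have h1 : 0 < p.2.1 ^ 2 := pow_two_pos_of_ne_zero h
    have h2 : 0 ≤ p.2.2 ^ 2 := sq_nonneg _
    unfold r2; linarith
  · have h1 : 0 < p.2.2 ^ 2 := pow_two_pos_of_ne_zero h
    have h2 : 0 ≤ p.2.1 ^ 2 := sq_nonneg _
    unfold r2; linarith

lemma isOpen_off : IsOpen {q : ℝ × ℝ × ℝ | q.2 ≠ 0} :=
  isOpen_ne.preimage continuous_snd

/-- All the partial-derivative data of a radial function `gf a b c β γ ∘ r2`. -/
lemma radial_pd (a b c β γ : ℝ) (p : ℝ × ℝ × ℝ) (hp : p.2 ≠ 0) :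
    pdT (fun q => gf a b c β γ (r2 q)) p = 0 ∧
    pdX (fun q => gf a b c β γ (r2 q)) p
      = gf 0 (b*β) (c*γ) (β-1) (γ-1) (r2 p) * (2*p.2.1) ∧
    pdY (fun q => gf a b c β γ (r2 q)) p
      = gf 0 (b*β) (c*γ) (β-1) (γ-1) (r2 p) * (2*p.2.2) ∧
    pdX (pdX (fun q => gf a b c β γ (r2 q))) p
        + pdY (pdY (fun q => gf a b c β γ (r2 q))) p
      = 4 * gf 0 (b*β) (c*γ) (β-1) (γ-1) (r2 p)
        + 4 * r2 p * gf 0 (b*β*(β-1)) (c*γ*(γ-1)) (β-2) (γ-2) (r2 p) := by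
  set G := gf 0 (b*β) (c*γ) (β-1) (γ-1) with hG
  set G' := gf 0 (b*β*(β-1)) (c*γ*(γ-1)) (β-2) (γ-2) with hG'
  have key : ∀ q : ℝ × ℝ × ℝ, q.2 ≠ 0 →
      HasFDerivAt (fun q => gf a b c β γ (r2 q))
        (G (r2 q) • ((2*q.2.1) • Lx + (2*q.2.2) • Ly)) q := fun q hq =>
    hasFDerivAt_radial _ _ q (gf_hasDerivAt a b c β γ (r2 q) (r2_pos hq).ne')
  have hmem : {q : ℝ × ℝ × ℝ | q.2 ≠ 0} ∈ nhds p := isOpen_off.mem_nhds hp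
  have hpdX : ∀ q : ℝ × ℝ × ℝ, q.2 ≠ 0 →
      pdX (fun q => gf a b c β γ (r2 q)) q = G (r2 q) * (2*q.2.1) := by
    intro q hq
    rw [pdX, (key q hq).fderiv]
    simp
  have hpdY : ∀ q : ℝ × ℝ × ℝ, q.2 ≠ 0 →
      pdY (fun q => gf a b c β γ (r2 q)) q = G (r2 q) * (2*q.2.2) := by
    intro q hq
    rw [pdY, (key q hq).fderiv]
    simp
  have hGd : HasDerivAt G (G' (r2 p)) (r2 p) := by
    have := gf_hasDerivAt 0 (b*β) (c*γ) (β-1) (γ-1) (r2 p) (r2_pos hp).ne'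
    convert this using 1
    simp [hG', gf]; ring_nf
  refine ⟨?_, hpdX p hp, hpdY p hp, ?_⟩
  · rw [pdT, (key p hp).fderiv]; simp
  · -- second derivatives
    have hevX : pdX (fun q => gf a b c β γ (r2 q)) =ᶠ[nhds p]
        fun q => G (r2 q) * (2*q.2.1) :=
      Filter.eventually_of_mem hmem (fun q hq => hpdX q hq)
    have hevY : pdY (fun q => gf a b c β γ (r2 q)) =ᶠ[nhds p]
        fun q => G (r2 q) * (2*q.2.2) :=
      Filter.eventually_of_mem hmem (fun q hq => hpdY q hq)
    have hx : HasFDerivAt (fun q : ℝ × ℝ × ℝ => 2*q.2.1) ((2:ℝ) • Lx) p :=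
      (Lx.hasFDerivAt (x := p)).const_mul 2
    have hy : HasFDerivAt (fun q : ℝ × ℝ × ℝ => 2*q.2.2) ((2:ℝ) • Ly) p :=
      (Ly.hasFDerivAt (x := p)).const_mul 2
    have hXX := (hasFDerivAt_radial G (G' (r2 p)) p hGd).mul hx
    have hYY := (hasFDerivAt_radial G (G' (r2 p)) p hGd).mul hy
    have eX : pdX (pdX (fun q => gf a b c β γ (r2 q))) p
        = G (r2 p) * 2 + 2*p.2.1 * (G' (r2 p) * (2*p.2.1)) := by
      rw [pdX, hevX.fderiv_eq, HasFDerivAt.fderiv (f := fun q => G (r2 q) * (2*q.2.1)) hXX]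
      simp
    have eY : pdY (pdY (fun q => gf a b c β γ (r2 q))) p
        = G (r2 p) * 2 + 2*p.2.2 * (G' (r2 p) * (2*p.2.2)) := by
      rw [pdY, hevY.fderiv_eq, HasFDerivAt.fderiv (f := fun q => G (r2 q) * (2*q.2.2)) hYY]
      simp
    rw [eX, eY]
    have : r2 p = p.2.1 ^ 2 + p.2.2 ^ 2 := rfl
    rw [this]; ring

lemma adv (x y s G : ℝ) (h : x^2 + y^2 = s) :
    x * (G * (2*x)) + y * (G * (2*y)) = 2 * s * G := by linear_combination 2 * G * h

lemma rot (x y G : ℝ) : x * (G * (2*y)) - y * (G * (2*x)) = 0 := by ring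

/-- Stationary radially symmetric exact solution (3-21), generic case
(`α ≠ 0`, `α ≠ 2d₃`): the time-independent functions
`u = 2(2d₂−α)/(x²+y²)`, `v = 2(2d₁−α)/(x²+y²)`,
`w = C₀ + C₁(x²+y²)^{−α/(2d₃)} + 2(2d₁−α)(2d₂−α)/((α−2d₃)(x²+y²))`
solve system (3-1) away from the spatial origin. -/
theorem stationary_radial_solution_generic
    (d₁ d₂ d₃ α C₀ C₁ : ℝ) (hd₃ : d₃ ≠ 0) (hα : α ≠ 0) (hα2 : α ≠ 2 * d₃)
    (F : ℝ → ℝ) (hF : Differentiable ℝ F) :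
    Solves31 α d₁ d₂ d₃ (deriv F)
      (fun p => 2 * (2 * d₂ - α) / (p.2.1 ^ 2 + p.2.2 ^ 2))
      (fun p => 2 * (2 * d₁ - α) / (p.2.1 ^ 2 + p.2.2 ^ 2))
      (fun p => C₀ + C₁ * (p.2.1 ^ 2 + p.2.2 ^ 2) ^ (-(α / (2 * d₃)))
        + 2 * (2 * d₁ - α) * (2 * d₂ - α) / ((α - 2 * d₃) * (p.2.1 ^ 2 + p.2.2 ^ 2)))
      {p : ℝ × ℝ × ℝ | p.2 ≠ 0} := by
  have ha2 : α - 2 * d₃ ≠ 0 := sub_ne_zero.mpr hα2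
  have hu : (fun p : ℝ × ℝ × ℝ => 2 * (2 * d₂ - α) / (p.2.1 ^ 2 + p.2.2 ^ 2))
      = fun q => gf 0 0 (2 * (2 * d₂ - α)) 1 (-1) (r2 q) := by
    funext q
    have h0 : (0:ℝ) ≤ q.2.1 ^ 2 + q.2.2 ^ 2 := add_nonneg (sq_nonneg _) (sq_nonneg _)
    simp only [gf, r2, Real.rpow_neg h0, Real.rpow_one, div_eq_mul_inv]
    ring
  have hv : (fun p : ℝ × ℝ × ℝ => 2 * (2 * d₁ - α) / (p.2.1 ^ 2 + p.2.2 ^ 2))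
      = fun q => gf 0 0 (2 * (2 * d₁ - α)) 1 (-1) (r2 q) := by
    funext q
    have h0 : (0:ℝ) ≤ q.2.1 ^ 2 + q.2.2 ^ 2 := add_nonneg (sq_nonneg _) (sq_nonneg _)
    simp only [gf, r2, Real.rpow_neg h0, Real.rpow_one, div_eq_mul_inv]
    ring
  have hw : (fun p : ℝ × ℝ × ℝ => C₀ + C₁ * (p.2.1 ^ 2 + p.2.2 ^ 2) ^ (-(α / (2 * d₃)))
        + 2 * (2 * d₁ - α) * (2 * d₂ - α) / ((α - 2 * d₃) * (p.2.1 ^ 2 + p.2.2 ^ 2)))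
      = fun q => gf C₀ C₁ (2 * (2 * d₁ - α) * (2 * d₂ - α) / (α - 2 * d₃))
          (-(α / (2 * d₃))) (-1) (r2 q) := by
    funext q
    have h0 : (0:ℝ) ≤ q.2.1 ^ 2 + q.2.2 ^ 2 := add_nonneg (sq_nonneg _) (sq_nonneg _)
    simp only [gf, r2, Real.rpow_neg h0, Real.rpow_one, div_eq_mul_inv, mul_inv]
    ring
  rw [Solves31, hu, hv, hw]
  intro p hp
  have hp' : p.2 ≠ 0 := hp
  have hs : 0 < r2 p := r2_pos hp'
  set s := r2 p with hsdef
  have hr : p.2.1 ^ 2 + p.2.2 ^ 2 = s := rfl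
  obtain ⟨tu, xu, yu, lu⟩ := radial_pd 0 0 (2 * (2 * d₂ - α)) 1 (-1) p hp'
  obtain ⟨tv, xv, yv, lv⟩ := radial_pd 0 0 (2 * (2 * d₁ - α)) 1 (-1) p hp'
  obtain ⟨tw, xw, yw, lw⟩ := radial_pd C₀ C₁
    (2 * (2 * d₁ - α) * (2 * d₂ - α) / (α - 2 * d₃)) (-(α / (2 * d₃))) (-1) p hp'
  have e0 : s ^ (1-1:ℝ) = 1 := by norm_num
  have e12 : s ^ (1-2:ℝ) = s⁻¹ := by
    rw [show ((1-2:ℝ)) = ((-1:ℤ):ℝ) by norm_num, Real.rpow_intCast]; norm_num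
  have em1 : s ^ (-1:ℝ) = s⁻¹ := by
    rw [Real.rpow_neg hs.le, Real.rpow_one]
  have em2 : s ^ (-1-1:ℝ) = (s^2)⁻¹ := by
    rw [show ((-1-1:ℝ)) = ((-2:ℤ):ℝ) by norm_num, Real.rpow_intCast]
    norm_num
  have em3 : s ^ (-1-2:ℝ) = (s^3)⁻¹ := by
    rw [show ((-1-2:ℝ)) = ((-3:ℤ):ℝ) by norm_num, Real.rpow_intCast]
    norm_num
  have eb1 : s ^ (-(α / (2 * d₃)) - 1) = s ^ (-(α / (2 * d₃))) / s := by
    rw [Real.rpow_sub hs, Real.rpow_one]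
  have eb2 : s ^ (-(α / (2 * d₃)) - 2) = s ^ (-(α / (2 * d₃))) / s ^ 2 := by
    rw [Real.rpow_sub hs, show ((2:ℝ)) = ((2:ℕ):ℝ) by norm_num, Real.rpow_natCast]
  refine ⟨?_, ?_, ?_⟩
  · rw [tu, xu, yu, lu, adv _ _ _ _ hr, rot, hr]
    simp only [gf, e0, e12, em1, em2, em3, Real.rpow_one, mul_zero, zero_mul,
      add_zero, zero_add, ← hsdef]
    field_simp
    ring
  · rw [tv, xv, yv, lv, adv _ _ _ _ hr, rot, hr]
    simp only [gf, e0, e12, em1, em2, em3, Real.rpow_one, mul_zero, zero_mul,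
      add_zero, zero_add, ← hsdef]
    field_simp
    ring
  · rw [tw, xw, yw, lw, adv _ _ _ _ hr, rot, hr]
    simp only [gf, e0, e12, em1, em2, em3, eb1, eb2, Real.rpow_one, mul_zero,
      zero_mul, add_zero, zero_add, ← hsdef]
    field_simp
    ring
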